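/- Gossip-step coupling inequality (appendix lemma, eq. (C4)). Under the stated hypotheses, −2⟨y⁺ − y, y_g + z_g − (y* + z*)⟩ ≤ (1/ϑ₂)‖y_g + z_g − (y* + z*)‖² − (1/ϑ₂)‖y_f⁺ + z_f⁺ − (y* + z*)‖² + 2ϑ₂‖y⁺ − y‖² − (1/(2ϑ₂χ))‖y_g + z_g‖_P². -/

import Mathlib

open MeasureTheory RealInnerProductSpace
open scoped ENNReal

noncomputable section

/-- The space `E = (ℝ^d)^n` with the standard Euclidean inner product. -/
abbrev Vs (d n : ℕ) : Type := EuclideanSpace ℝ (Fin n × Fin d)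

/-- The consensus subspace `L = {(x₁,…,xₙ) : x₁ = ⋯ = xₙ}` of `(ℝ^d)^n`. -/
def consensus (d n : ℕ) : Submodule ℝ (Vs d n) where
  carrier := {x | ∀ i j : Fin n, ∀ k : Fin d, x (i, k) = x (j, k)}
  add_mem' := by
    intro a b ha hb i j k
    simp only [Set.mem_setOf_eq] at ha hb
    simp [PiLp.add_apply, ha i j k, hb i j k]
  zero_mem' := by intro i j k; rfl
  smul_mem' := by
    intro c a ha i j k
    simp only [Set.mem_setOf_eq] at ha
    simp [PiLp.smul_apply, ha i j k]

/-- Orthogonal projection of `E` onto `L⊥`. -/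
def projP (d n : ℕ) (x : Vs d n) : Vs d n :=
  ((consensus d n)ᗮ.orthogonalProjectionOnto x : Vs d n)

/-- The Kronecker product `W ⊗ I_d` acting on `E = (ℝ^d)^n`. -/
def kron {d n : ℕ} (W : Matrix (Fin n) (Fin n) ℝ) (x : Vs d n) : Vs d n :=
  WithLp.toLp 2 (fun p : Fin n × Fin d => ∑ j, W p.1 j * x (j, p.2))

lemma kron_sub' {d n : ℕ} (W : Matrix (Fin n) (Fin n) ℝ) (x y : Vs d n) :
    kron W (x - y) = kron W x - kron W y := by
  ext p
  simp [kron, mul_sub, Finset.sum_sub_distrib]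

lemma inner_kron' {d n : ℕ} {W : Matrix (Fin n) (Fin n) ℝ} (hW : W.IsSymm) (x y : Vs d n) :
    ⟪kron W x, y⟫ = ⟪x, kron W y⟫ := by
  have swap_inner : ∀ (f : Fin n → Fin d → Fin n → ℝ),
      (∑ i, ∑ k, ∑ j, f i k j) = ∑ i, ∑ j, ∑ k, f i k j :=
    fun f => Finset.sum_congr rfl fun _ _ => Finset.sum_comm
  simp only [PiLp.inner_apply, RCLike.inner_apply, conj_trivial, kron, PiLp.toLp_apply]
  rw [Fintype.sum_prod_type, Fintype.sum_prod_type]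
  simp_rw [Finset.sum_mul, Finset.mul_sum]
  rw [swap_inner, swap_inner, Finset.sum_comm]
  refine Finset.sum_congr rfl fun a _ => Finset.sum_congr rfl fun b _ =>
    Finset.sum_congr rfl fun k _ => ?_
  rw [hW.apply b a]
  ring

lemma kron_consensus_zero' {d n : ℕ} (W : Matrix (Fin n) (Fin n) ℝ)
    (hrow : ∀ i, ∑ j, W i j = 0) (s : Vs d n) (hs : s ∈ consensus d n) :
    kron W s = 0 := by
  ext p
  have hs' : ∀ j : Fin n, s (j, p.2) = s (p.1, p.2) := fun j => hs j p.1 p.2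
  show (∑ j, W p.1 j * s (j, p.2)) = 0
  calc ∑ j, W p.1 j * s (j, p.2) = ∑ j, W p.1 j * s (p.1, p.2) :=
        Finset.sum_congr rfl fun j _ => by rw [hs' j]
    _ = (∑ j, W p.1 j) * s (p.1, p.2) := by rw [Finset.sum_mul]
    _ = 0 := by rw [hrow]; ring

lemma abstract_ineq {E : Type*} [NormedAddCommGroup E] [InnerProductSpace ℝ E]
    (u s δ K w : E) (ϑ₂ χ : ℝ) (hϑ₂ : 0 < ϑ₂) (hχ0 : 0 < χ)
    (hKs : ⟪s, K⟫ = 0) (hKw : ⟪u, K⟫ = ⟪w, K⟫)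
    (hE3 : (1/χ) * ‖w‖^2 ≤ 2 * ⟪w, K⟫ - ‖K‖^2) :
    -2 * ⟪δ, u - s⟫ ≤ (1/ϑ₂) * ‖u - s‖^2 - (1/ϑ₂) * ‖u - s + ϑ₂ • δ - ((1:ℝ)/2) • K‖^2
      + 2 * ϑ₂ * ‖δ‖^2 - (1/(2*ϑ₂*χ)) * ‖w‖^2 := by
  have hB : ‖u - s + ϑ₂ • δ - ((1:ℝ)/2) • K‖^2
      = ‖u - s‖^2 + ϑ₂^2*‖δ‖^2 + (1/4)*‖K‖^2
        + 2*ϑ₂*⟪δ, u - s⟫ - ⟪w, K⟫ - ϑ₂*⟪δ, K⟫ := by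
    simp only [← real_inner_self_eq_norm_sq, inner_sub_left, inner_sub_right,
      inner_add_left, inner_add_right, real_inner_smul_left, real_inner_smul_right]
    rw [real_inner_comm s u, real_inner_comm u δ, real_inner_comm s δ,
      real_inner_comm u K, real_inner_comm s K, real_inner_comm δ K]
    rw [hKs, hKw]
    ring
  have hE2 : (0:ℝ) ≤ ϑ₂^2*‖δ‖^2 + ϑ₂*⟪δ, K⟫ + (1/4)*‖K‖^2 := by
    have h : (0:ℝ) ≤ ‖ϑ₂ • δ + ((1:ℝ)/2) • K‖^2 := sq_nonneg _
    have h2 : ‖ϑ₂ • δ + ((1:ℝ)/2) • K‖^2 = ϑ₂^2*‖δ‖^2 + ϑ₂*⟪δ, K⟫ + (1/4)*‖K‖^2 := by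
      simp only [← real_inner_self_eq_norm_sq, inner_add_left, inner_add_right,
        real_inner_smul_left, real_inner_smul_right]
      rw [real_inner_comm δ K]
      ring
    linarith [h2 ▸ h]
  have t1 : (0:ℝ) ≤ (⟪w, K⟫ - (1/2)*‖K‖^2) - (1/(2*χ))*‖w‖^2 := by
    have hhalf : (1/(2*χ)) * ‖w‖^2 = (1/2) * ((1/χ) * ‖w‖^2) := by ring
    linarith
  have hϑ₂' : ϑ₂ ≠ 0 := ne_of_gt hϑ₂
  have hχ' : χ ≠ 0 := ne_of_gt hχ0
  have hS : (0:ℝ) ≤ (ϑ₂^2*‖δ‖^2 + ϑ₂*⟪δ, K⟫ + (1/4)*‖K‖^2)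
      + ((⟪w, K⟫ - (1/2)*‖K‖^2) - (1/(2*χ))*‖w‖^2) := by linarith
  have hpos : (0:ℝ) < 1/ϑ₂ := by positivity
  have expr : ((1/ϑ₂) * ‖u - s‖^2 - (1/ϑ₂) * ‖u - s + ϑ₂ • δ - ((1:ℝ)/2) • K‖^2
        + 2 * ϑ₂ * ‖δ‖^2 - (1/(2*ϑ₂*χ)) * ‖w‖^2) - (-2 * ⟪δ, u - s⟫)
      = (1/ϑ₂) * ((ϑ₂^2*‖δ‖^2 + ϑ₂*⟪δ, K⟫ + (1/4)*‖K‖^2)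
        + ((⟪w, K⟫ - (1/2)*‖K‖^2) - (1/(2*χ))*‖w‖^2)) := by
    rw [hB]
    field_simp
    ring
  nlinarith [mul_nonneg (le_of_lt hpos) hS, expr]

/-- Gossip-step coupling inequality (appendix lemma, eq. (C4)):
with `ζ = 1/2`, `y_f⁺ := y_g + ϑ₂(y⁺ − y)` and `z_f⁺ := z_g − ζ(W ⊗ I_d)(y_g + z_g)`,
`−2⟪y⁺ − y, y_g + z_g − (y* + z*)⟫ ≤ (1/ϑ₂)‖y_g + z_g − (y* + z*)‖²
  − (1/ϑ₂)‖y_f⁺ + z_f⁺ − (y* + z*)‖² + 2ϑ₂‖y⁺ − y‖² − (1/(2ϑ₂χ))‖y_g + z_g‖_P²`. -/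
theorem gossip_step_coupling_inequality
    {d n : ℕ} (hd : 0 < d) (hn : 0 < n)
    (W : Matrix (Fin n) (Fin n) ℝ) (hWsymm : W.IsSymm) (hWpsd : W.PosSemidef)
    (hWker : ∀ v : Fin n → ℝ, W.mulVec v = 0 ↔ ∃ c, ∀ i, v i = c)
    (χ : ℝ) (hχ : 1 ≤ χ)
    (hcontr : ∀ u ∈ (consensus d n)ᗮ, ‖kron W u - u‖ ^ 2 ≤ (1 - χ⁻¹) * ‖u‖ ^ 2)
    (ϑ₂ ζ : ℝ) (hϑ₂ : 0 < ϑ₂) (hζ : ζ = 1 / 2)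
    (y yg yp zg : Vs d n)
    (ystar zstar : Vs d n) (hyz : ystar + zstar ∈ consensus d n)
    (yfp : Vs d n) (hyfp : yfp = yg + ϑ₂ • (yp - y))
    (zfp : Vs d n) (hzfp : zfp = zg - ζ • kron W (yg + zg)) :
    -2 * ⟪yp - y, yg + zg - (ystar + zstar)⟫ ≤
      (1 / ϑ₂) * ‖yg + zg - (ystar + zstar)‖ ^ 2
        - (1 / ϑ₂) * ‖yfp + zfp - (ystar + zstar)‖ ^ 2
        + 2 * ϑ₂ * ‖yp - y‖ ^ 2
        - (1 / (2 * ϑ₂ * χ)) * ‖projP d n (yg + zg)‖ ^ 2 := by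
  have hχ0 : (0:ℝ) < χ := lt_of_lt_of_le one_pos hχ
  have hrow : ∀ i, ∑ j, W i j = 0 := by
    have h1 : W.mulVec (fun _ => (1:ℝ)) = 0 := (hWker _).mpr ⟨1, fun _ => rfl⟩
    intro i
    have := congrFun h1 i
    simpa [Matrix.mulVec, dotProduct] using this
  have hwmem : projP d n (yg + zg) ∈ (consensus d n)ᗮ :=
    ((consensus d n)ᗮ.orthogonalProjectionOnto (yg + zg)).2
  have huw : (yg + zg) - projP d n (yg + zg) ∈ consensus d n := by
    have h := Submodule.sub_starProjection_mem_orthogonal (K := (consensus d n)ᗮ) (yg + zg)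
    rwa [Submodule.orthogonal_orthogonal] at h
  have hKu : kron W (yg + zg) = kron W (projP d n (yg + zg)) := by
    have h0 : kron W ((yg + zg) - projP d n (yg + zg)) = 0 :=
      kron_consensus_zero' W hrow _ huw
    have h1 : kron W (yg + zg) - kron W (projP d n (yg + zg)) = 0 := by
      rw [← kron_sub' W, h0]
    exact sub_eq_zero.mp h1
  have hKs : ⟪ystar + zstar, kron W (yg + zg)⟫ = 0 := by
    rw [hKu, ← inner_kron' hWsymm, kron_consensus_zero' W hrow _ hyz, inner_zero_left]
  have hKw : ⟪yg + zg, kron W (yg + zg)⟫ = ⟪projP d n (yg + zg), kron W (yg + zg)⟫ := by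
    have h1 : ⟪(yg + zg) - projP d n (yg + zg), kron W (yg + zg)⟫ = 0 := by
      rw [hKu, ← inner_kron' hWsymm, kron_consensus_zero' W hrow _ huw, inner_zero_left]
    rw [inner_sub_left] at h1
    linarith
  have hE3 : (1/χ) * ‖projP d n (yg + zg)‖^2
      ≤ 2 * ⟪projP d n (yg + zg), kron W (yg + zg)⟫ - ‖kron W (yg + zg)‖^2 := by
    have h := hcontr _ hwmem
    have hexp : ‖kron W (projP d n (yg + zg)) - projP d n (yg + zg)‖^2
        = ‖kron W (projP d n (yg + zg))‖^2
          - 2*⟪projP d n (yg + zg), kron W (projP d n (yg + zg))⟫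
          + ‖projP d n (yg + zg)‖^2 := by
      rw [norm_sub_sq_real, real_inner_comm]
    rw [hexp] at h
    rw [hKu]
    have hinv : χ⁻¹ = 1/χ := inv_eq_one_div χ
    rw [hinv] at h
    nlinarith [h]
  have hveq : yfp + zfp - (ystar + zstar)
      = (yg + zg) - (ystar + zstar) + ϑ₂ • (yp - y) - ((1:ℝ)/2) • kron W (yg + zg) := by
    rw [hyfp, hzfp, hζ]
    abel
  rw [hveq]
  exact abstract_ineq (yg + zg) (ystar + zstar) (yp - y) (kron W (yg + zg))
    (projP d n (yg + zg)) ϑ₂ χ hϑ₂ hχ0 hKs hKw hE3
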